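/- For all integers $k, l, m, n$: (1) $D_4(2k, 2l+1, 2m+1, 2n+1) \equiv 8(k + l + n) - 3 \pmod{16}$; (2) $\widetilde{D}_4(2k, 2l+1, 2m+1, 2n+1) \equiv 8(k + l + n) + 1 \pmod{16}$. -/

import Mathlib

/-- The group determinant of `C₄`: the determinant of the `4 × 4` circulant matrix whose
`(i, j)` entry is `x_{(i - j) mod 4}`. -/
def D4 {R : Type*} [CommRing R] (x0 x1 x2 x3 : R) : R :=
  Matrix.det !![x0, x3, x2, x1; x1, x0, x3, x2; x2, x1, x0, x3; x3, x2, x1, x0]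

/-- `D̃₄`. -/
def D4t {R : Type*} [CommRing R] (x0 x1 x2 x3 : R) : R :=
  (x0 ^ 2 - x2 ^ 2 + 2 * x1 * x3) ^ 2 + (x1 ^ 2 - x3 ^ 2 - 2 * x0 * x2) ^ 2

/-- `D₄(2k, 2l+1, 2m+1, 2n+1) ≡ 8(k+l+n) - 3` and
`D̃₄(2k, 2l+1, 2m+1, 2n+1) ≡ 8(k+l+n) + 1 (mod 16)`. -/
theorem D4_D4t_even_first_mod_sixteen (k l m n : ℤ) :
    (D4 (2 * k) (2 * l + 1) (2 * m + 1) (2 * n + 1) ≡ 8 * (k + l + n) - 3 [ZMOD 16]) ∧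
    (D4t (2 * k) (2 * l + 1) (2 * m + 1) (2 * n + 1) ≡ 8 * (k + l + n) + 1 [ZMOD 16]) := by
  obtain ⟨e, he⟩ := Int.even_mul_succ_self (m - 1)
  obtain ⟨f, hf⟩ := Int.even_mul_succ_self (k - 1)
  constructor
  · refine (Int.ModEq.symm (Int.modEq_iff_dvd.mpr ⟨(-1)*n - 1*n^2 - 2*n^3 - 1*n^4 - 2*m*n - 2*m^2*n + 2*m^3 + m^4 - 1*l + l*n + 2*l*n^2 - 2*l*m - 4*l*m*n - 2*l*m^2 - 4*l*m^2*n - 1*l^2 + 2*l^2*n + 2*l^2*n^2 - 2*l^3 - 1*l^4 + 2*k*n + 2*k*n^2 + 2*k*m + 4*k*m*n + 4*k*m*n^2 + 2*k*l + 4*k*l*m + 2*k*l^2 + 4*k*l^2*m - 1*k^2 - 2*k^2*n - 2*k^2*m - 2*k^2*m^2 - 2*k^2*l - 4*k^2*l*n + k^4 + e - f, ?_⟩))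
    simp [D4, Matrix.det_succ_row_zero, Fin.sum_univ_succ, Fin.succAbove]
    linear_combination (8 : ℤ) * he + (-8 : ℤ) * hf
  · refine (Int.ModEq.symm (Int.modEq_iff_dvd.mpr ⟨2*n^2 + 2*n^3 + n^4 - 2*m*n - 2*m^2*n + 2*m^3 + m^4 + l*n + 2*l*n^2 - 2*l*m - 4*l*m*n - 2*l*m^2 - 4*l*m^2*n + 2*l^2 + 2*l^2*n + 2*l^2*n^2 + 2*l^3 + l^4 + 2*k*n + 2*k*n^2 + 4*k*m*n + 4*k*m*n^2 - 2*k*l - 4*k*l*m - 2*k*l^2 - 4*k*l^2*m + k^2 + 2*k^2*n + 2*k^2*m + 2*k^2*m^2 + 2*k^2*l + 4*k^2*l*n + k^4 + e + f, ?_⟩))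
    simp only [D4t]
    linear_combination (8 : ℤ) * he + (8 : ℤ) * hf
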